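/- Let M be a submonoid of the additive monoid ℚ₊ of nonnegative rational numbers. Then M is difference-closed if and only if M is integrally closed. -/

import Mathlib

/-- `M` is difference-closed: for any `a, b ∈ M` with `b ≤ a`, `a - b ∈ M`. -/
def DifferenceClosed (M : AddSubmonoid ℚ) : Prop :=
  ∀ a ∈ M, ∀ b ∈ M, b ≤ a → a - b ∈ M

/-- `M` is integrally closed: for every `n ∈ ℕ`, `n ≥ 1`, and any `x, y ∈ M` with
`y ≤ x`, if `n·(x - y) ∈ M` then `x - y ∈ M`. -/
def IntegrallyClosedMonoid (M : AddSubmonoid ℚ) : Prop :=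
  ∀ n : ℕ, 0 < n → ∀ x ∈ M, ∀ y ∈ M, y ≤ x → (n : ℚ) * (x - y) ∈ M → x - y ∈ M

theorem differenceClosed_iff_integrallyClosed (M : AddSubmonoid ℚ)
    (hM : ∀ x ∈ M, (0 : ℚ) ≤ x) :
    DifferenceClosed M ↔ IntegrallyClosedMonoid M := by
  constructor
  · intro h n hn x hx y hy hle _
    exact h x hx y hy hle
  · intro h a ha b hb hle
    rcases eq_or_lt_of_le hle with heq | hlt
    · simpa [heq] using M.zero_mem
    have ha0 : 0 < a := lt_of_le_of_lt (hM b hb) hlt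
    have hb0 : 0 ≤ b := hM b hb
    set p : ℤ := a.num * b.den with hp
    set r : ℤ := b.num * a.den with hr
    have hp0 : 0 < p := mul_pos (Rat.num_pos.mpr ha0) (by positivity)
    have hr0 : 0 ≤ r := mul_nonneg (Rat.num_nonneg.mpr hb0) (by positivity)
    have hpr : r ≤ p := (Rat.le_iff b a).mp hle
    have hda : (a.den : ℚ) ≠ 0 := by positivity
    have hdb : (b.den : ℚ) ≠ 0 := by positivity
    have hA : (a.num : ℚ) = a * a.den := (div_eq_iff hda).mp (Rat.num_div_den a)
    have hB : (b.num : ℚ) = b * b.den := (div_eq_iff hdb).mp (Rat.num_div_den b)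
    have hkey0 : (p : ℚ) * b = (r : ℚ) * a := by
      rw [hp, hr]; push_cast; rw [hA, hB]; ring
    have h1 : ((p.toNat : ℕ) : ℚ) = (p : ℚ) := by
      exact_mod_cast congrArg (Int.cast : ℤ → ℚ) (Int.toNat_of_nonneg hp0.le)
    have h2 : (((p - r).toNat : ℕ) : ℚ) = (p : ℚ) - (r : ℚ) := by
      have := Int.toNat_of_nonneg (show (0:ℤ) ≤ p - r by omega)
      exact_mod_cast congrArg (Int.cast : ℤ → ℚ) this
    have key : (p.toNat : ℚ) * (a - b) = ((p - r).toNat : ℕ) • a := by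
      rw [nsmul_eq_mul, h1, h2, mul_sub, hkey0]
      ring
    refine h p.toNat (by omega) a ha b hb hle ?_
    rw [key]
    exact nsmul_mem ha _
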